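/- Let E be a real inner product space, let f : E → ℝ be differentiable at y and at y', let σ > 0, and let Q, Qᵃ, Q' be reals with 0 < Q' ≤ Qᵃ ≤ Q and Qᵃ > 1. Let y', x', yᵃ, xᵃ, y, x, w ∈ E and suppose: (i) (1 + 1/(√Qᵃ − 1))·V_{Qᵃ}(yᵃ, xᵃ; w) ≤ V_{Qᵃ}(y', x'; w); (ii) x + √Qᵃ·(x − y) = xᵃ + √Qᵃ·(xᵃ − yᵃ) and f(y) ≤ f(yᵃ); (iii) the descent conditions f(w) ≤ f(y) − (1/(2σQ))·‖∇f(y)‖² and f(w) ≤ f(y') − (1/(2σQᵃ))·‖∇f(y')‖² hold; (iv) the σ-strong-convexity inequality holds at the pairs (w, y) and (w, y'), i.e. f(w) ≥ f(u) + ⟨∇f(u), w − u⟩ + (σ/2)·‖w − u‖² for u ∈ {y, y'}. Then V_Q(y, x; w) ≤ (1/(1 + 1/(√Qᵃ − 1)))·(1 + 2·(Q − Qᵃ))·(1 + 2·(Qᵃ − Q'))·(Q/Q')^{3/2}·V_{Q'}(y', x'; w). -/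
import Mathlib

open RealInnerProductSpace

set_option maxHeartbeats 1000000 in
private lemma key_poly (s ρ : ℝ) (hs : 0 < s) (hρ : 1 < ρ) :
    ((1+2*(s^2*(ρ^2-1)))*ρ^3)*(4*s^2*ρ^2)*(ρ-1)^2 ≤
      (((1+2*(s^2*(ρ^2-1)))*ρ^3) - ρ^2)*(((1+2*(s^2*(ρ^2-1)))*ρ^3) - 1) := by
  have hρ0 : 0 < ρ := lt_trans one_pos hρ
  have hρ1 : 0 ≤ ρ - 1 := by linarith
  have hρ3 : 1 ≤ ρ^3 := one_le_pow₀ hρ.le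
  have hb1 : 0 ≤ (s^2*ρ^5*(ρ-1))*(2*(ρ-1)^2) := by positivity
  have hq : 0 < ρ^2 - ρ + 2 := by nlinarith [sq_nonneg (ρ-1)]
  have hb2 : 0 ≤ 4*s^4*ρ^5*((ρ-1)^2*(ρ+1))*((ρ-1)*(ρ^2-ρ+2)) := by positivity
  have hA1 : 0 ≤ ρ^2*(ρ-1)*(ρ^3-1) := by
    have : 0 ≤ ρ^3 - 1 := by linarith
    positivity
  have hA3 : 0 ≤ 2*(s^2*(ρ^2-1))*ρ^3*(ρ^3-1) := by
    have h1 : 0 ≤ ρ^2 - 1 := by nlinarith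
    have h2 : 0 ≤ ρ^3 - 1 := by linarith
    positivity
  nlinarith [hb1, hb2, hA1, hA3]

set_option maxHeartbeats 1000000 in
private lemma scalar_key (σ s ρ a r m Z : ℝ) (hσ : 0 < σ) (hs : 0 < s) (hρ : 1 < ρ)
    (ha : 0 ≤ a) (hr : 0 ≤ r) (hm : 0 ≤ m) (hZ : 0 ≤ Z)
    (hP : σ/2*m^2 ≤ 4*(s*ρ)^2*a)
    (hZb : (1+s)*Z ≤ (1+s*ρ)*r + (s*ρ-s)*m) :
    a + σ/2*Z^2 ≤ (1+2*((s*ρ)^2-s^2))*ρ^3*(a + σ/2*r^2) := by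
  have hρ0 : 0 < ρ := lt_trans one_pos hρ
  obtain ⟨K, hK⟩ : ∃ K : ℝ, K = (1+2*(s^2*(ρ^2-1)))*ρ^3 := ⟨_, rfl⟩
  have hgeq : (1+2*((s*ρ)^2-s^2))*ρ^3 = K := by rw [hK]; ring
  rw [hgeq]
  have hρ3 : 1 ≤ ρ^3 := one_le_pow₀ hρ.le
  have hρ21 : (0:ℝ) ≤ ρ^2 - 1 := by nlinarith
  have hD : 0 ≤ s^2*(ρ^2-1) := mul_nonneg (sq_nonneg s) hρ21
  have hK1 : 1 ≤ K := by rw [hK]; nlinarith [hD]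
  have hK0 : 0 ≤ K := le_trans zero_le_one hK1
  have hKρ : ρ^2 < K := by
    rw [hK]
    nlinarith [mul_nonneg hD (by positivity : (0:ℝ) ≤ ρ^3),
      mul_pos (by positivity : (0:ℝ) < ρ^2) (by linarith : (0:ℝ) < ρ - 1)]
  have hkey : K*(4*s^2*ρ^2)*(ρ-1)^2 ≤ (K - ρ^2)*(K - 1) := by
    rw [hK]; exact key_poly s ρ hs hρ
  have hX : (0:ℝ) ≤ s^2*a := by positivity
  have h12b : (K*(4*s^2*ρ^2)*(ρ-1)^2)*(s^2*a) ≤ ((K - ρ^2)*(K - 1))*(s^2*a) :=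
    mul_le_mul_of_nonneg_right hkey hX
  have hKc2 : (0:ℝ) ≤ K*(s^2*(ρ-1)^2) := mul_nonneg hK0 (by positivity)
  have h12c : (σ/2*m^2)*(K*(s^2*(ρ-1)^2)) ≤ (4*(s*ρ)^2*a)*(K*(s^2*(ρ-1)^2)) :=
    mul_le_mul_of_nonneg_right hP hKc2
  have h0 : 0 ≤ (K - ρ^2)*(K - 1)*a :=
    mul_nonneg (mul_nonneg (by linarith) (by linarith)) ha
  have h12d : ((K - ρ^2)*(K - 1))*(s^2*a) ≤ (K - ρ^2)*(K - 1)*((1+s)^2*a) := by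
    nlinarith [h0, mul_nonneg h0 hs.le]
  have h12 : (σ/2*m^2)*(K*(s^2*(ρ-1)^2)) ≤ (K - ρ^2)*(K - 1)*((1+s)^2*a) := by
    have e1 : (4*(s*ρ)^2*a)*(K*(s^2*(ρ-1)^2)) = (K*(4*s^2*ρ^2)*(ρ-1)^2)*(s^2*a) := by ring
    linarith [h12b, h12c, e1.le, e1.ge]
  have hsq : 0 ≤ σ/2*((K - ρ^2)*((1+s)*r) - ρ*(s*(ρ-1))*m)^2 := by positivity
  have hmain : 0 ≤ (K - ρ^2)*( K*((1+s)^2*a) + K*(σ/2*((1+s)*r)^2)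
      - ((1+s)^2*a + σ/2*(ρ*((1+s)*r) + (s*(ρ-1))*m)^2) ) := by
    have e2 : (K - ρ^2)*( K*((1+s)^2*a) + K*(σ/2*((1+s)*r)^2)
        - ((1+s)^2*a + σ/2*(ρ*((1+s)*r) + (s*(ρ-1))*m)^2) )
      = σ/2*((K - ρ^2)*((1+s)*r) - ρ*(s*(ρ-1))*m)^2
        + ((K - ρ^2)*(K - 1)*((1+s)^2*a) - (σ/2*m^2)*(K*(s^2*(ρ-1)^2))) := by ring
    rw [e2]
    linarith [hsq, h12]
  have hΔ : (1+s)^2*a + σ/2*(ρ*((1+s)*r) + (s*(ρ-1))*m)^2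
      ≤ K*((1+s)^2*a) + K*(σ/2*((1+s)*r)^2) := by
    nlinarith [hmain, hKρ]
  have hZb2 : (1+s)*Z ≤ ρ*((1+s)*r) + (s*(ρ-1))*m := by
    nlinarith [hZb, mul_nonneg (by linarith : (0:ℝ) ≤ ρ - 1) hr]
  have hZnn : 0 ≤ (1+s)*Z := mul_nonneg (by linarith) hZ
  have hZsq : ((1+s)*Z)^2 ≤ (ρ*((1+s)*r) + (s*(ρ-1))*m)^2 :=
    pow_le_pow_left₀ hZnn hZb2 2
  have h5 := mul_le_mul_of_nonneg_left hZsq (by positivity : (0:ℝ) ≤ σ/2)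
  have hfin : (1+s)^2*(a + σ/2*Z^2) ≤ (1+s)^2*(K*(a + σ/2*r^2)) := by
    have e3 : (1+s)^2*(a + σ/2*Z^2) = (1+s)^2*a + σ/2*((1+s)*Z)^2 := by ring
    have e4 : (1+s)^2*(K*(a + σ/2*r^2)) = K*((1+s)^2*a) + K*(σ/2*((1+s)*r)^2) := by ring
    rw [e3, e4]
    linarith [hΔ, h5]
  have hpos : (0:ℝ) < (1+s)^2 := by positivity
  exact le_of_mul_le_mul_left (by linarith [hfin]) hpos

set_option maxHeartbeats 1000000 in
private lemma core_lem {E : Type*} [NormedAddCommGroup E] [InnerProductSpace ℝ E] [CompleteSpace E]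
    (f : E → ℝ) (σ Qb q : ℝ) (hσ : 0 < σ) (hq : 0 < q) (hqQ : q ≤ Qb)
    (y x w : E)
    (hdesc : f w ≤ f y - 1/(2*(σ*Qb)) * ‖gradient f y‖^2)
    (hsc : f w ≥ f y + ⟪gradient f y, w - y⟫ + σ/2*‖w - y‖^2) :
    f y - f w + σ/2*‖x + Real.sqrt Qb • (x - y) - w‖^2 ≤
      (1+2*(Qb - q))*(Real.sqrt Qb / Real.sqrt q)^3 *
        (f y - f w + σ/2*‖x + Real.sqrt q • (x - y) - w‖^2) := by
  have hQb0 : 0 < Qb := lt_of_lt_of_le hq hqQ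
  rcases eq_or_lt_of_le hqQ with rfl | hlt
  · have h1 : Real.sqrt q / Real.sqrt q = 1 := div_self (ne_of_gt (Real.sqrt_pos.2 hq))
    rw [h1]
    norm_num
  · set g := gradient f y with hg
    set s := Real.sqrt q with hsdef
    set S := Real.sqrt Qb with hSdef
    have hs : 0 < s := Real.sqrt_pos.2 hq
    have hsS : s < S := Real.sqrt_lt_sqrt hq.le hlt
    have hS0 : 0 < S := lt_trans hs hsS
    have hρ : 1 < S/s := (one_lt_div hs).2 hsS
    have hsρ : s * (S/s) = S := by field_simp
    have hs2 : s^2 = q := Real.sq_sqrt hq.le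
    have hS2 : S^2 = Qb := Real.sq_sqrt hQb0.le
    set a := f y - f w with hadef
    set m := ‖w - y‖ with hmdef
    set r := ‖x + s • (x - y) - w‖ with hrdef
    set Z := ‖x + S • (x - y) - w‖ with hZdef
    have hσQb : 0 < σ * Qb := mul_pos hσ hQb0
    have hga : 1/(2*(σ*Qb))*‖g‖^2 ≤ a := by rw [hadef]; linarith [hdesc]
    have ha : 0 ≤ a := le_trans (by positivity) hga
    have hg2 : ‖g‖^2 ≤ 2*(σ*Qb)*a := by
      have e : (2*(σ*Qb)) * (1/(2*(σ*Qb))*‖g‖^2) = ‖g‖^2 := by field_simp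
      calc ‖g‖^2 = (2*(σ*Qb)) * (1/(2*(σ*Qb))*‖g‖^2) := e.symm
        _ ≤ 2*(σ*Qb)*a := mul_le_mul_of_nonneg_left hga (by positivity)
    have hiv : ⟪g, w - y⟫ = -⟪g, y - w⟫ := by rw [← neg_sub y w, inner_neg_right]
    have hnyw : ‖y - w‖ = m := norm_sub_rev y w
    have hcs : ⟪g, y - w⟫ ≤ ‖g‖ * m := by
      calc ⟪g, y - w⟫ ≤ ‖g‖ * ‖y - w‖ := real_inner_le_norm g (y - w)
        _ = ‖g‖ * m := by rw [hnyw]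
    have h4 : a + σ/2*m^2 ≤ ‖g‖*m := by
      have hsc' := hsc
      rw [hiv] at hsc'
      linarith
    have hm : 0 ≤ m := norm_nonneg _
    have hsqd : (a + σ/2*m^2)^2 ≤ (‖g‖*m)^2 :=
      pow_le_pow_left₀ (by positivity) h4 2
    have h6 : (a + σ/2*m^2)^2 ≤ 2*(σ*Qb)*a*m^2 := by
      have h7 := mul_le_mul_of_nonneg_right hg2 (sq_nonneg m)
      calc (a + σ/2*m^2)^2 ≤ (‖g‖*m)^2 := hsqd
        _ = ‖g‖^2*m^2 := by ring
        _ ≤ 2*(σ*Qb)*a*m^2 := h7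
    have hP' : σ/2*m^2 ≤ 4*Qb*a := by
      by_contra hcon
      push_neg at hcon
      have hP0 : (0:ℝ) ≤ 4*Qb*a := by positivity
      have hPpos : 0 < σ/2*m^2 := lt_of_le_of_lt hP0 hcon
      have h7 : 4*Qb*a*(σ/2*m^2) < (σ/2*m^2)*(σ/2*m^2) :=
        mul_lt_mul_of_pos_right hcon hPpos
      nlinarith [h6, h7, mul_nonneg ha hPpos.le, sq_nonneg a]
    have hvec : (1+s) • (x + S • (x - y) - w)
        = (1+S) • (x + s • (x - y) - w) + (S-s) • (w - y) := by module
    have hZb : (1+s)*Z ≤ (1+S)*r + (S-s)*m := by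
      have h8 : ‖(1+s) • (x + S • (x - y) - w)‖ = (1+s)*Z := by
        rw [norm_smul, Real.norm_eq_abs, abs_of_pos (by linarith : (0:ℝ) < 1+s)]
      have h9 : ‖(S-s) • (w - y)‖ = (S-s)*m := by
        rw [norm_smul, Real.norm_eq_abs, abs_of_nonneg (by linarith : (0:ℝ) ≤ S-s)]
      have h10 : ‖(1+S) • (x + s • (x - y) - w)‖ = (1+S)*r := by
        rw [norm_smul, Real.norm_eq_abs, abs_of_pos (by linarith : (0:ℝ) < 1+S)]
      calc (1+s)*Z = ‖(1+s) • (x + S • (x - y) - w)‖ := h8.symm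
        _ = ‖(1+S) • (x + s • (x - y) - w) + (S-s) • (w - y)‖ := by rw [hvec]
        _ ≤ ‖(1+S) • (x + s • (x - y) - w)‖ + ‖(S-s) • (w - y)‖ := norm_add_le _ _
        _ = (1+S)*r + (S-s)*m := by rw [h10, h9]
    have hP2 : σ/2*m^2 ≤ 4*(s*(S/s))^2*a := by rw [hsρ, hS2]; exact hP'
    have hZb2 : (1+s)*Z ≤ (1+s*(S/s))*r + (s*(S/s)-s)*m := by rw [hsρ]; exact hZb
    have hmn := scalar_key σ s (S/s) a r m Z hσ hs hρ ha (norm_nonneg _) hm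
      (norm_nonneg _) hP2 hZb2
    rw [hsρ, hS2, hs2] at hmn
    exact hmn

set_option maxHeartbeats 1000000 in
/-- Restarted Lyapunov recursion, descent reference point (Lemma combined-restart (b)):
under the descent conditions on `w` the gradient slack vanishes at the cost of the
factors `(1 + 2(Q − Qᵃ))·(1 + 2(Qᵃ − Q'))`.
Here `V_q(y, x; w) = f y − f w + (σ/2)·‖x + √q·(x − y) − w‖²`. -/
theorem stmt9 {E : Type*} [NormedAddCommGroup E] [InnerProductSpace ℝ E] [CompleteSpace E]
    (f : E → ℝ) (σ Q Qa Q' : ℝ) (hσ : 0 < σ)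
    (hQ' : 0 < Q') (hQ'Qa : Q' ≤ Qa) (hQaQ : Qa ≤ Q) (hQa1 : 1 < Qa)
    (y' x' ya xa y x w : E)
    (hdiff_y : DifferentiableAt ℝ f y) (hdiff_y' : DifferentiableAt ℝ f y')
    (hstep : (1 + 1 / (Real.sqrt Qa - 1)) *
        (f ya - f w + σ / 2 * ‖xa + Real.sqrt Qa • (xa - ya) - w‖ ^ 2) ≤
      f y' - f w + σ / 2 * ‖x' + Real.sqrt Qa • (x' - y') - w‖ ^ 2)
    (hz : x + Real.sqrt Qa • (x - y) = xa + Real.sqrt Qa • (xa - ya))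
    (hfy : f y ≤ f ya)
    (hdesc_y : f w ≤ f y - 1 / (2 * (σ * Q)) * ‖gradient f y‖ ^ 2)
    (hdesc_y' : f w ≤ f y' - 1 / (2 * (σ * Qa)) * ‖gradient f y'‖ ^ 2)
    (hsc_y : f w ≥ f y + ⟪gradient f y, w - y⟫ + σ / 2 * ‖w - y‖ ^ 2)
    (hsc_y' : f w ≥ f y' + ⟪gradient f y', w - y'⟫ + σ / 2 * ‖w - y'‖ ^ 2) :
    f y - f w + σ / 2 * ‖x + Real.sqrt Q • (x - y) - w‖ ^ 2 ≤
      (1 / (1 + 1 / (Real.sqrt Qa - 1))) * (1 + 2 * (Q - Qa)) * (1 + 2 * (Qa - Q')) *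
        (Q / Q') ^ ((3 : ℝ) / 2) *
        (f y' - f w + σ / 2 * ‖x' + Real.sqrt Q' • (x' - y') - w‖ ^ 2) := by
  have hQa0 : (0:ℝ) < Qa := lt_trans one_pos hQa1
  have hQ0 : (0:ℝ) < Q := lt_of_lt_of_le hQa0 hQaQ
  have hsa1 : 1 < Real.sqrt Qa := by
    rw [show (1:ℝ) = Real.sqrt 1 from Real.sqrt_one.symm]
    exact Real.sqrt_lt_sqrt zero_le_one hQa1
  have hδ : 0 < 1 / (Real.sqrt Qa - 1) := one_div_pos.2 (by linarith)
  set δ : ℝ := 1 / (Real.sqrt Qa - 1) with hδdef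
  have h1δ : (0:ℝ) < 1 + δ := by linarith
  have hC1 := core_lem f σ Q Qa hσ hQa0 hQaQ y x w hdesc_y hsc_y
  have hC2 := core_lem f σ Qa Q' hσ hQ' hQ'Qa y' x' w hdesc_y' hsc_y'
  have hC1nn : (0:ℝ) ≤ (1+2*(Q - Qa))*(Real.sqrt Q / Real.sqrt Qa)^3 :=
    mul_nonneg (by linarith) (by positivity)
  have hC2nn : (0:ℝ) ≤ (1+2*(Qa - Q'))*(Real.sqrt Qa / Real.sqrt Q')^3 :=
    mul_nonneg (by linarith) (by positivity)
  have h2 : f y - f w + σ/2*‖x + Real.sqrt Qa • (x - y) - w‖^2 ≤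
      f ya - f w + σ/2*‖xa + Real.sqrt Qa • (xa - ya) - w‖^2 := by
    rw [hz]; linarith
  have h3 : f ya - f w + σ/2*‖xa + Real.sqrt Qa • (xa - ya) - w‖^2 ≤
      1/(1+δ) * (f y' - f w + σ/2*‖x' + Real.sqrt Qa • (x' - y') - w‖^2) := by
    rw [one_div_mul_eq_div, le_div_iff₀ h1δ]
    linarith [hstep]
  have hQa' : Real.sqrt Qa ≠ 0 := ne_of_gt (by linarith)
  have hpow : (Real.sqrt Q / Real.sqrt Qa)^3 * (Real.sqrt Qa / Real.sqrt Q')^3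
      = (Q/Q') ^ ((3:ℝ)/2) := by
    have h1 : Real.sqrt Q / Real.sqrt Qa * (Real.sqrt Qa / Real.sqrt Q')
        = Real.sqrt Q / Real.sqrt Q' := by
      field_simp
    calc (Real.sqrt Q / Real.sqrt Qa)^3 * (Real.sqrt Qa / Real.sqrt Q')^3
        = (Real.sqrt Q / Real.sqrt Qa * (Real.sqrt Qa / Real.sqrt Q'))^3 := (mul_pow _ _ 3).symm
      _ = (Real.sqrt Q / Real.sqrt Q')^3 := by rw [h1]
      _ = (Real.sqrt (Q/Q'))^3 := by rw [Real.sqrt_div hQ0.le]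
      _ = ((Q/Q') ^ ((1:ℝ)/2))^(3:ℕ) := by rw [Real.sqrt_eq_rpow]
      _ = (Q/Q') ^ ((3:ℝ)/2) := by
          rw [← Real.rpow_natCast ((Q/Q') ^ ((1:ℝ)/2)) 3,
            ← Real.rpow_mul (by positivity : (0:ℝ) ≤ Q/Q')]
          norm_num
  calc f y - f w + σ/2*‖x + Real.sqrt Q • (x - y) - w‖^2
      ≤ (1+2*(Q - Qa))*(Real.sqrt Q / Real.sqrt Qa)^3 *
        (f y - f w + σ/2*‖x + Real.sqrt Qa • (x - y) - w‖^2) := hC1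
    _ ≤ (1+2*(Q - Qa))*(Real.sqrt Q / Real.sqrt Qa)^3 *
        (f ya - f w + σ/2*‖xa + Real.sqrt Qa • (xa - ya) - w‖^2) :=
        mul_le_mul_of_nonneg_left h2 hC1nn
    _ ≤ (1+2*(Q - Qa))*(Real.sqrt Q / Real.sqrt Qa)^3 *
        (1/(1+δ) * (f y' - f w + σ/2*‖x' + Real.sqrt Qa • (x' - y') - w‖^2)) :=
        mul_le_mul_of_nonneg_left h3 hC1nn
    _ ≤ (1+2*(Q - Qa))*(Real.sqrt Q / Real.sqrt Qa)^3 *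
        (1/(1+δ) * ((1+2*(Qa - Q'))*(Real.sqrt Qa / Real.sqrt Q')^3 *
          (f y' - f w + σ/2*‖x' + Real.sqrt Q' • (x' - y') - w‖^2))) :=
        mul_le_mul_of_nonneg_left
          (mul_le_mul_of_nonneg_left hC2 (by positivity)) hC1nn
    _ = (1 / (1+δ)) * (1 + 2*(Q - Qa)) * (1 + 2*(Qa - Q')) * ((Q/Q') ^ ((3:ℝ)/2)) *
        (f y' - f w + σ/2*‖x' + Real.sqrt Q' • (x' - y') - w‖^2) := by
        rw [← hpow]; ring
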